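/- Let d ≥ 1 and let G₁, …, Gₘ be pairwise vertex-disjoint finite simple connected graphs, with a chosen vertex uᵢ ∈ V(Gᵢ) for each i. Let G be the graph obtained from the disjoint union of G₁, …, Gₘ by adding a clique C of 2d new vertices and making every vertex of C adjacent to uᵢ for every i ∈ {1, …, m}. Then G has a d-cut if and only if there exists some i ∈ {1, …, m} such that Gᵢ has a d-cut. -/
import Mathlib


variable {V : Type*}

/-- A `d`-cut of a simple graph `G`: a partition `(A, B)` of the vertex set into two
nonempty parts such that every vertex of `A` has at most `d` neighbors in `B` and
every vertex of `B` has at most `d` neighbors in `A`. -/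
def IsDCut (G : SimpleGraph V) (d : ℕ) (A B : Set V) : Prop :=
  A.Nonempty ∧ B.Nonempty ∧ Disjoint A B ∧ A ∪ B = Set.univ ∧
    (∀ v ∈ A, (G.neighborSet v ∩ B).ncard ≤ d) ∧
    (∀ v ∈ B, (G.neighborSet v ∩ A).ncard ≤ d)

/-- A vertex set `T` is monochromatic if every `d`-cut of `G` has `T` entirely on one side. -/
def Monochromatic (G : SimpleGraph V) (d : ℕ) (T : Set V) : Prop :=
  ∀ A B : Set V, IsDCut G d A B → T ⊆ A ∨ T ⊆ B

/-- The edge cut of a cut `(A, B)`: the set of edges of `G` with one endpoint in `A`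
and the other endpoint in `B`. -/
def edgeCut (G : SimpleGraph V) (A B : Set V) : Set (Sym2 V) :=
  {e | e ∈ G.edgeSet ∧ ∃ u v, e = s(u, v) ∧ u ∈ A ∧ v ∈ B}

/-- A minimal `d`-cut: no `d`-cut has an edge cut that is a proper subset of its edge cut. -/
def IsMinimalDCut (G : SimpleGraph V) (d : ℕ) (A B : Set V) : Prop :=
  IsDCut G d A B ∧ ∀ A' B' : Set V, IsDCut G d A' B' → ¬ edgeCut G A' B' ⊂ edgeCut G A B

/-- A maximal `d`-cut: no `d`-cut has an edge cut that properly contains its edge cut. -/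
def IsMaximalDCut (G : SimpleGraph V) (d : ℕ) (A B : Set V) : Prop :=
  IsDCut G d A B ∧ ∀ A' B' : Set V, IsDCut G d A' B' → ¬ edgeCut G A B ⊂ edgeCut G A' B'

/-- The graph obtained from the disjoint union of the graphs `Gs i` by adding a clique
`C` of `2d` new vertices and making every vertex of `C` adjacent to the chosen vertex
`u i` of each `Gs i`. -/
def composedGraph (d m : ℕ) (W : Fin m → Type*) (Gs : ∀ i, SimpleGraph (W i))
    (u : ∀ i, W i) : SimpleGraph ((Σ i, W i) ⊕ Fin (2 * d)) :=
  SimpleGraph.fromRel (fun a b =>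
    (∃ (i : Fin m) (x y : W i), a = Sum.inl ⟨i, x⟩ ∧ b = Sum.inl ⟨i, y⟩ ∧ (Gs i).Adj x y) ∨
    (∃ (i : Fin m) (c : Fin (2 * d)), a = Sum.inl ⟨i, u i⟩ ∧ b = Sum.inr c) ∨
    (∃ c c' : Fin (2 * d), a = Sum.inr c ∧ b = Sum.inr c'))


section Helpers

variable {d m : ℕ} {W : Fin m → Type*} {Gs : ∀ i, SimpleGraph (W i)} {u : ∀ i, W i}

lemma IsDCut.symm' {G : SimpleGraph V} {A B : Set V} (h : IsDCut G d A B) :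
    IsDCut G d B A := by
  obtain ⟨h1, h2, h3, h4, h5, h6⟩ := h
  exact ⟨h2, h1, h3.symm, by rw [Set.union_comm]; exact h4, h6, h5⟩

lemma cg_adj_inl_inl {i : Fin m} {x y : W i} :
    (composedGraph d m W Gs u).Adj (Sum.inl ⟨i, x⟩) (Sum.inl ⟨i, y⟩) ↔ (Gs i).Adj x y := by
  simp only [composedGraph, SimpleGraph.fromRel_adj, ne_eq, Sum.inl.injEq, Sigma.mk.inj_iff]
  constructor
  · rintro ⟨hne, h | h⟩ <;>
      rcases h with ⟨j, a, b, ⟨rfl, h1⟩, ⟨-, h2⟩, hadj⟩ | (⟨j, c, -, h⟩ | ⟨c, c', h, -⟩) <;>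
      first
        | (cases eq_of_heq h1; cases eq_of_heq h2;
           first | exact hadj | exact hadj.symm)
        | exact absurd h (by simp)
  · intro h
    exact ⟨fun ⟨_, hh⟩ => (Gs i).ne_of_adj h (eq_of_heq hh),
      Or.inl (Or.inl ⟨i, x, y, ⟨rfl, HEq.rfl⟩, ⟨rfl, HEq.rfl⟩, h⟩)⟩

lemma cg_adj_inl_inr {i : Fin m} {x : W i} {c : Fin (2*d)} :
    (composedGraph d m W Gs u).Adj (Sum.inl ⟨i, x⟩) (Sum.inr c) ↔ x = u i := by
  simp only [composedGraph, SimpleGraph.fromRel_adj]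
  constructor
  · rintro ⟨hne, h | h⟩ <;>
      rcases h with ⟨j, a, b, h1, h2, _⟩ | (⟨j, c', h1, h2⟩ | ⟨c', c'', h1, h2⟩) <;>
        simp_all [Sigma.mk.inj_iff] <;>
        (obtain ⟨rfl, h⟩ := h1; exact eq_of_heq h)
  · rintro rfl
    exact ⟨by simp, Or.inl (Or.inr (Or.inl ⟨i, c, rfl, rfl⟩))⟩

lemma cg_adj_inr_inr {c c' : Fin (2*d)} :
    (composedGraph d m W Gs u).Adj (Sum.inr c : (Σ i, W i) ⊕ Fin (2*d)) (Sum.inr c') ↔ c ≠ c' := by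
  simp only [composedGraph, SimpleGraph.fromRel_adj]
  constructor
  · rintro ⟨hne, _⟩; simpa using hne
  · intro h; exact ⟨by simpa using h, Or.inl (Or.inr (Or.inr ⟨c, c', rfl, rfl⟩))⟩

lemma cg_adj_inl_inl_ne {i j : Fin m} {x : W i} {y : W j} (h : i ≠ j) :
    ¬ (composedGraph d m W Gs u).Adj (Sum.inl ⟨i, x⟩) (Sum.inl ⟨j, y⟩) := by
  simp only [composedGraph, SimpleGraph.fromRel_adj]
  rintro ⟨hne, hh | hh⟩ <;>
    rcases hh with ⟨k, a, b, h1, h2, _⟩ | (⟨k, c', h1, h2⟩ | ⟨c', c'', h1, h2⟩) <;>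
    simp_all [Sigma.mk.inj_iff]

lemma inl_mk_injective (i : Fin m) :
    Function.Injective (fun y : W i => (Sum.inl ⟨i, y⟩ : (Σ i, W i) ⊕ Fin (2*d))) := by
  intro a b h
  simpa [Sigma.mk.inj_iff] using h

variable [∀ i, Fintype (W i)]

/-- Backward direction, assuming `u i ∈ A`. -/
lemma cg_backward (hd : 1 ≤ d) (i : Fin m) (A B : Set (W i))
    (h : IsDCut (Gs i) d A B) (hu : u i ∈ A) :
    ∃ A' B' : Set ((Σ i, W i) ⊕ Fin (2 * d)), IsDCut (composedGraph d m W Gs u) d A' B' := by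
  obtain ⟨hA, hB, hdisj, huniv, hcA, hcB⟩ := h
  set f : W i → (Σ i, W i) ⊕ Fin (2*d) := fun y => Sum.inl ⟨i, y⟩ with hf
  refine ⟨(f '' B)ᶜ, f '' B, ?_, hB.image f, disjoint_compl_left, Set.compl_union_self _, ?_, ?_⟩
  · exact ⟨Sum.inr ⟨0, by omega⟩, by rintro ⟨y, -, h⟩; exact absurd h (by simp [hf])⟩
  · rintro (⟨j, y⟩ | c) hv
    · by_cases hij : i = j
      · subst hij
        have hyB : y ∉ B := fun hyB => hv ⟨y, hyB, rfl⟩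
        have hyA : y ∈ A := by
          have := Set.mem_univ y; rw [← huniv] at this
          exact this.resolve_right hyB
        have hsub : (composedGraph d m W Gs u).neighborSet (Sum.inl ⟨i, y⟩) ∩ (f '' B) ⊆
            f '' ((Gs i).neighborSet y ∩ B) := by
          rintro w ⟨hadj, z, hz, rfl⟩
          exact ⟨z, ⟨cg_adj_inl_inl.mp hadj, hz⟩, rfl⟩
        calc ((composedGraph d m W Gs u).neighborSet (Sum.inl ⟨i, y⟩) ∩ (f '' B)).ncard
            ≤ (f '' ((Gs i).neighborSet y ∩ B)).ncard := Set.ncard_le_ncard hsub (Set.toFinite _)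
          _ = ((Gs i).neighborSet y ∩ B).ncard :=
              Set.ncard_image_of_injective _ (inl_mk_injective i)
          _ ≤ d := hcA y hyA
      · have : (composedGraph d m W Gs u).neighborSet (Sum.inl ⟨j, y⟩) ∩ (f '' B) = ∅ := by
          ext w
          simp only [Set.mem_inter_iff, Set.mem_empty_iff_false, iff_false, not_and]
          rintro hadj ⟨z, hz, rfl⟩
          exact cg_adj_inl_inl_ne (fun he => hij he.symm) hadj
        simp [this]
    · have : (composedGraph d m W Gs u).neighborSet (Sum.inr c) ∩ (f '' B) = ∅ := by
        ext w
        simp only [Set.mem_inter_iff, Set.mem_empty_iff_false, iff_false, not_and]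
        rintro hadj ⟨z, hz, rfl⟩
        have := cg_adj_inl_inr.mp hadj.symm
        subst this
        exact hdisj.le_bot ⟨hu, hz⟩ |>.elim
      simp [this]
  · rintro v ⟨x, hx, rfl⟩
    have hsub : (composedGraph d m W Gs u).neighborSet (f x) ∩ (f '' B)ᶜ ⊆
        f '' ((Gs i).neighborSet x ∩ A) := by
      rintro (⟨j, y⟩ | c) ⟨hadj, hw⟩
      · by_cases hij : i = j
        · subst hij
          have hyB : y ∉ B := fun hyB => hw ⟨y, hyB, rfl⟩
          have hyA : y ∈ A := by
            have := Set.mem_univ y; rw [← huniv] at this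
            exact this.resolve_right hyB
          exact ⟨y, ⟨cg_adj_inl_inl.mp hadj, hyA⟩, rfl⟩
        · exact absurd hadj (cg_adj_inl_inl_ne hij)
      · have hxu := cg_adj_inl_inr.mp hadj
        subst hxu
        exact hdisj.le_bot ⟨hu, hx⟩ |>.elim
    calc ((composedGraph d m W Gs u).neighborSet (f x) ∩ (f '' B)ᶜ).ncard
        ≤ (f '' ((Gs i).neighborSet x ∩ A)).ncard := Set.ncard_le_ncard hsub (Set.toFinite _)
      _ = ((Gs i).neighborSet x ∩ A).ncard :=
          Set.ncard_image_of_injective _ (inl_mk_injective i)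
      _ ≤ d := hcB x hx

/-- Forward direction, assuming the clique is contained in `A`. -/
lemma cg_forward_aux (hd : 1 ≤ d) {A B : Set ((Σ i, W i) ⊕ Fin (2 * d))}
    (h : IsDCut (composedGraph d m W Gs u) d A B)
    (hC : Set.range (Sum.inr : Fin (2*d) → (Σ i, W i) ⊕ Fin (2*d)) ⊆ A) :
    ∃ i : Fin m, ∃ A' B' : Set (W i), IsDCut (Gs i) d A' B' := by
  obtain ⟨hA, hB, hdisj, huniv, hcA, hcB⟩ := h
  -- every u_j is in A
  have hu : ∀ j : Fin m, (Sum.inl ⟨j, u j⟩ : (Σ i, W i) ⊕ Fin (2*d)) ∈ A := by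
    intro j
    by_contra hj
    have hjB : (Sum.inl ⟨j, u j⟩ : (Σ i, W i) ⊕ Fin (2*d)) ∈ B := by
      have := Set.mem_univ (Sum.inl ⟨j, u j⟩ : (Σ i, W i) ⊕ Fin (2*d))
      rw [← huniv] at this
      exact this.resolve_left hj
    have hsub : Set.range (Sum.inr : Fin (2*d) → (Σ i, W i) ⊕ Fin (2*d)) ⊆
        (composedGraph d m W Gs u).neighborSet (Sum.inl ⟨j, u j⟩) ∩ A := by
      rintro w ⟨c, rfl⟩
      exact ⟨cg_adj_inl_inr.mpr rfl, hC ⟨c, rfl⟩⟩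
    have h2d : (Set.range (Sum.inr : Fin (2*d) → (Σ i, W i) ⊕ Fin (2*d))).ncard = 2 * d := by
      rw [← Set.image_univ, Set.ncard_image_of_injective _ Sum.inr_injective, Set.ncard_univ]
      simp
    have := Set.ncard_le_ncard hsub (Set.toFinite _)
    have := hcB _ hjB
    omega
  -- find an element of B, necessarily of the form inl ⟨i, x⟩ with x ≠ u i
  obtain ⟨w, hw⟩ := hB
  obtain (⟨i, x⟩ | c) := w
  · refine ⟨i, {y | (Sum.inl ⟨i, y⟩ : (Σ i, W i) ⊕ Fin (2*d)) ∈ A},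
      {y | (Sum.inl ⟨i, y⟩ : (Σ i, W i) ⊕ Fin (2*d)) ∈ B}, ⟨u i, hu i⟩, ⟨x, hw⟩, ?_, ?_, ?_, ?_⟩
    · rw [Set.disjoint_left]
      intro y hyA hyB
      exact hdisj.le_bot ⟨hyA, hyB⟩
    · ext y
      have := Set.mem_univ (Sum.inl ⟨i, y⟩ : (Σ i, W i) ⊕ Fin (2*d))
      rw [← huniv] at this
      simpa using this
    · intro y hy
      have hsub : (fun z => (Sum.inl ⟨i, z⟩ : (Σ i, W i) ⊕ Fin (2*d))) ''
          ((Gs i).neighborSet y ∩ {z | (Sum.inl ⟨i, z⟩ : (Σ i, W i) ⊕ Fin (2*d)) ∈ B}) ⊆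
          (composedGraph d m W Gs u).neighborSet (Sum.inl ⟨i, y⟩) ∩ B := by
        rintro w ⟨z, ⟨hadj, hz⟩, rfl⟩
        exact ⟨cg_adj_inl_inl.mpr hadj, hz⟩
      calc ((Gs i).neighborSet y ∩ _).ncard
          = _ := (Set.ncard_image_of_injective _ (inl_mk_injective i)).symm
        _ ≤ ((composedGraph d m W Gs u).neighborSet (Sum.inl ⟨i, y⟩) ∩ B).ncard :=
            Set.ncard_le_ncard hsub (Set.toFinite _)
        _ ≤ d := hcA _ hy
    · intro y hy
      have hsub : (fun z => (Sum.inl ⟨i, z⟩ : (Σ i, W i) ⊕ Fin (2*d))) ''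
          ((Gs i).neighborSet y ∩ {z | (Sum.inl ⟨i, z⟩ : (Σ i, W i) ⊕ Fin (2*d)) ∈ A}) ⊆
          (composedGraph d m W Gs u).neighborSet (Sum.inl ⟨i, y⟩) ∩ A := by
        rintro w ⟨z, ⟨hadj, hz⟩, rfl⟩
        exact ⟨cg_adj_inl_inl.mpr hadj, hz⟩
      calc ((Gs i).neighborSet y ∩ _).ncard
          = _ := (Set.ncard_image_of_injective _ (inl_mk_injective i)).symm
        _ ≤ ((composedGraph d m W Gs u).neighborSet (Sum.inl ⟨i, y⟩) ∩ A).ncard :=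
            Set.ncard_le_ncard hsub (Set.toFinite _)
        _ ≤ d := hcB _ hy
  · exact absurd (hdisj.le_bot ⟨hC ⟨c, rfl⟩, hw⟩) (by simp)

/-- The clique is monochromatic. -/
lemma cg_clique_mono (hd : 1 ≤ d) (hm : 1 ≤ m) {A B : Set ((Σ i, W i) ⊕ Fin (2 * d))}
    (h : IsDCut (composedGraph d m W Gs u) d A B) :
    Set.range (Sum.inr : Fin (2*d) → (Σ i, W i) ⊕ Fin (2*d)) ⊆ A ∨
    Set.range (Sum.inr : Fin (2*d) → (Σ i, W i) ⊕ Fin (2*d)) ⊆ B := by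
  obtain ⟨hA, hB, hdisj, huniv, hcA, hcB⟩ := h
  by_contra hcon
  push_neg at hcon
  obtain ⟨hnA, hnB⟩ := hcon
  set SA : Set (Fin (2*d)) := {c | (Sum.inr c : (Σ i, W i) ⊕ Fin (2*d)) ∈ A} with hSA
  set SB : Set (Fin (2*d)) := {c | (Sum.inr c : (Σ i, W i) ⊕ Fin (2*d)) ∈ B} with hSB
  have hmemAB : ∀ c : Fin (2*d), c ∈ SA ∨ c ∈ SB := by
    intro c
    have := Set.mem_univ (Sum.inr c : (Σ i, W i) ⊕ Fin (2*d))
    rw [← huniv] at this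
    exact this
  have hSAne : SA.Nonempty := by
    simp only [Set.not_subset] at hnB
    obtain ⟨w, ⟨c, rfl⟩, hwB⟩ := hnB
    exact ⟨c, (hmemAB c).resolve_right hwB⟩
  have hSBne : SB.Nonempty := by
    simp only [Set.not_subset] at hnA
    obtain ⟨w, ⟨c, rfl⟩, hwA⟩ := hnA
    exact ⟨c, (hmemAB c).resolve_left hwA⟩
  have hSdisj : ∀ c, c ∈ SA → c ∉ SB := fun c h1 h2 => hdisj.le_bot ⟨h1, h2⟩
  -- counting: for c ∈ SA, inr '' SB ⊆ N(inr c) ∩ B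
  have hcntB : ∀ c ∈ SA, SB.ncard ≤ d := by
    intro c hc
    have hsub : Sum.inr '' SB ⊆ (composedGraph d m W Gs u).neighborSet (Sum.inr c) ∩ B := by
      rintro w ⟨c', hc', rfl⟩
      exact ⟨cg_adj_inr_inr.mpr (fun he => hSdisj c hc (he ▸ hc')), hc'⟩
    calc SB.ncard = (Sum.inr '' SB : Set ((Σ i, W i) ⊕ Fin (2*d))).ncard :=
          (Set.ncard_image_of_injective _ Sum.inr_injective).symm
      _ ≤ _ := Set.ncard_le_ncard hsub (Set.toFinite _)
      _ ≤ d := hcA _ hc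
  have hcntA : ∀ c ∈ SB, SA.ncard ≤ d := by
    intro c hc
    have hsub : Sum.inr '' SA ⊆ (composedGraph d m W Gs u).neighborSet (Sum.inr c) ∩ A := by
      rintro w ⟨c', hc', rfl⟩
      exact ⟨cg_adj_inr_inr.mpr (fun he => hSdisj c' hc' (he ▸ hc)), hc'⟩
    calc SA.ncard = (Sum.inr '' SA : Set ((Σ i, W i) ⊕ Fin (2*d))).ncard :=
          (Set.ncard_image_of_injective _ Sum.inr_injective).symm
      _ ≤ _ := Set.ncard_le_ncard hsub (Set.toFinite _)
      _ ≤ d := hcB _ hc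
  obtain ⟨ca, hca⟩ := hSAne
  obtain ⟨cb, hcb⟩ := hSBne
  have hBle := hcntB ca hca
  have hAle := hcntA cb hcb
  have hsum : SA.ncard + SB.ncard = 2 * d := by
    rw [← Set.ncard_union_eq (Set.disjoint_left.mpr hSdisj) (Set.toFinite _) (Set.toFinite _)]
    have : SA ∪ SB = Set.univ := Set.eq_univ_of_forall hmemAB
    rw [this, Set.ncard_univ]
    simp
  have hSAd : SA.ncard = d := by omega
  have hSBd : SB.ncard = d := by omega
  -- now locate u 0
  set j : Fin m := ⟨0, hm⟩ with hj
  have hju := Set.mem_univ (Sum.inl ⟨j, u j⟩ : (Σ i, W i) ⊕ Fin (2*d))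
  rw [← huniv] at hju
  rcases hju with hju | hju
  · -- u j ∈ A : contradiction with c ∈ SB having ≥ d+1 neighbors in A
    have hsub : insert (Sum.inl ⟨j, u j⟩ : (Σ i, W i) ⊕ Fin (2*d)) (Sum.inr '' SA) ⊆
        (composedGraph d m W Gs u).neighborSet (Sum.inr cb) ∩ A := by
      rintro w (rfl | ⟨c', hc', rfl⟩)
      · exact ⟨(cg_adj_inl_inr.mpr rfl).symm, hju⟩
      · exact ⟨cg_adj_inr_inr.mpr (fun he => hSdisj c' hc' (he ▸ hcb)), hc'⟩
    have hins : (insert (Sum.inl ⟨j, u j⟩ : (Σ i, W i) ⊕ Fin (2*d)) (Sum.inr '' SA)).ncard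
        = d + 1 := by
      rw [Set.ncard_insert_of_notMem (by rintro ⟨c', -, h⟩; exact absurd h (by simp))
        (Set.toFinite _), Set.ncard_image_of_injective _ Sum.inr_injective, hSAd]
    have hle := Set.ncard_le_ncard hsub (Set.toFinite _)
    have := hcB _ hcb
    omega
  · have hsub : insert (Sum.inl ⟨j, u j⟩ : (Σ i, W i) ⊕ Fin (2*d)) (Sum.inr '' SB) ⊆
        (composedGraph d m W Gs u).neighborSet (Sum.inr ca) ∩ B := by
      rintro w (rfl | ⟨c', hc', rfl⟩)
      · exact ⟨(cg_adj_inl_inr.mpr rfl).symm, hju⟩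
      · exact ⟨cg_adj_inr_inr.mpr (fun he => hSdisj ca hca (he ▸ hc')), hc'⟩
    have hins : (insert (Sum.inl ⟨j, u j⟩ : (Σ i, W i) ⊕ Fin (2*d)) (Sum.inr '' SB)).ncard
        = d + 1 := by
      rw [Set.ncard_insert_of_notMem (by rintro ⟨c', -, h⟩; exact absurd h (by simp))
        (Set.toFinite _), Set.ncard_image_of_injective _ Sum.inr_injective, hSBd]
    have hle := Set.ncard_le_ncard hsub (Set.toFinite _)
    have := hcA _ hca
    omega

end Helpers

/-- The composed graph has a `d`-cut if and only if one of the constituent connected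
graphs has a `d`-cut. -/
theorem composedGraph_has_dcut_iff (d m : ℕ) (hd : 1 ≤ d) (hm : 1 ≤ m)
    (W : Fin m → Type*) [∀ i, Fintype (W i)]
    (Gs : ∀ i, SimpleGraph (W i)) (hconn : ∀ i, (Gs i).Connected) (u : ∀ i, W i) :
    (∃ A B : Set ((Σ i, W i) ⊕ Fin (2 * d)), IsDCut (composedGraph d m W Gs u) d A B) ↔
    (∃ i : Fin m, ∃ A B : Set (W i), IsDCut (Gs i) d A B) := by
  constructor
  · rintro ⟨A, B, h⟩
    rcases cg_clique_mono hd hm h with hC | hC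
    · exact cg_forward_aux hd h hC
    · exact cg_forward_aux hd h.symm' hC
  · rintro ⟨i, A, B, h⟩
    have := Set.mem_univ (u i)
    rw [← h.2.2.2.1] at this
    rcases this with hu | hu
    · exact cg_backward hd i A B h hu
    · exact cg_backward hd i B A h.symm' hu
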